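/- ZPostQAL ⊆ NQAL ∩ coNQAL: if L ⊆ Σ* is recognized with error bound 0 by some RT-PostQFA, then there is an RT-QFA whose acceptance probability is positive exactly on the members of L, and there is an RT-QFA whose acceptance probability is positive exactly on the non-members of L. -/

import Mathlib

noncomputable section

/-- The input alphabet extended with the two endmarkers `¢` and `$`. -/
inductive ESym (α : Type) : Type where
  | cent : ESym α
  | dollar : ESym α
  | letter : α → ESym α

/-- The diagonal 0-1 projection matrix supported on a set of states. -/
def projM {m : ℕ} (S : Finset (Fin m)) : Matrix (Fin m) (Fin m) ℂ :=
  Matrix.diagonal (fun i => if i ∈ S then 1 else 0)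

/-- The density matrix obtained by applying, in order, the Kraus families for
`¢`, the letters of `w`, and `$` to the initial density matrix `|q₁⟩⟨q₁|`. -/
def qRun {α : Type} {n : ℕ} {k : ESym α → ℕ}
    (E : ∀ σ : ESym α, Fin (k σ) → Matrix (Fin (n + 1)) (Fin (n + 1)) ℂ)
    (w : List α) : Matrix (Fin (n + 1)) (Fin (n + 1)) ℂ :=
  (ESym.cent :: (w.map ESym.letter ++ [ESym.dollar])).foldl
    (fun ρ σ => ∑ i : Fin (k σ), E σ i * ρ * (E σ i).conjTranspose)
    (Matrix.single 0 0 1)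

/-- A real-time quantum finite automaton with postselection (RT-PostQFA). -/
structure PostQFA (α : Type) where
  n : ℕ
  k : ESym α → ℕ
  E : ∀ σ : ESym α, Fin (k σ) → Matrix (Fin (n + 1)) (Fin (n + 1)) ℂ
  kraus : ∀ σ : ESym α, ∑ i : Fin (k σ), (E σ i).conjTranspose * E σ i = 1
  Qpa : Finset (Fin (n + 1))
  Qpr : Finset (Fin (n + 1))
  disj : Disjoint Qpa Qpr
  postPos : ∀ w : List α,
    0 < ((projM Qpa * qRun E w).trace).re + ((projM Qpr * qRun E w).trace).re

/-- Acceptance probability before postselection. -/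
def PostQFA.pacc {α : Type} (M : PostQFA α) (w : List α) : ℝ :=
  ((projM M.Qpa * qRun M.E w).trace).re

/-- Rejection probability before postselection. -/
def PostQFA.prej {α : Type} (M : PostQFA α) (w : List α) : ℝ :=
  ((projM M.Qpr * qRun M.E w).trace).re

/-- Normalized acceptance probability of an RT-PostQFA. -/
def PostQFA.fa {α : Type} (M : PostQFA α) (w : List α) : ℝ :=
  M.pacc w / (M.pacc w + M.prej w)

/-- Recognition of a language with error bound `ε`. -/
def PostQFA.Recognizes {α : Type} (M : PostQFA α) (L : Set (List α)) (ε : ℝ) : Prop :=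
  ∀ w : List α, (w ∈ L → 1 - ε ≤ M.fa w) ∧ (w ∉ L → M.fa w ≤ ε)

/-- The class of languages recognized by RT-PostQFAs with bounded error. -/
def PostQAL {α : Type} (L : Set (List α)) : Prop :=
  ∃ (M : PostQFA α) (ε : ℝ), 0 ≤ ε ∧ ε < 1 / 2 ∧ M.Recognizes L ε

/-- Recognition with zero error: `fa = 1` on members, `fa = 0` on non-members. -/
def PostQFA.RecognizesZero {α : Type} (M : PostQFA α) (L : Set (List α)) : Prop :=
  ∀ w : List α, (w ∈ L → M.fa w = 1) ∧ (w ∉ L → M.fa w = 0)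

/-- The class of languages recognized by RT-PostQFAs with zero error. -/
def ZPostQAL {α : Type} (L : Set (List α)) : Prop :=
  ∃ M : PostQFA α, M.RecognizesZero L

/-- A standard real-time quantum finite automaton (RT-QFA). -/
structure QFA (α : Type) where
  n : ℕ
  k : ESym α → ℕ
  E : ∀ σ : ESym α, Fin (k σ) → Matrix (Fin (n + 1)) (Fin (n + 1)) ℂ
  kraus : ∀ σ : ESym α, ∑ i : Fin (k σ), (E σ i).conjTranspose * E σ i = 1
  Qa : Finset (Fin (n + 1))

/-- Acceptance probability of an RT-QFA. -/
def QFA.fa {α : Type} (M : QFA α) (w : List α) : ℝ :=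
  ((projM M.Qa * qRun M.E w).trace).re

/-- `ZPostQAL ⊆ NQAL ∩ coNQAL`: a language recognized with zero error by an
RT-PostQFA is recognized with cutpoint zero by some RT-QFA, and so is its complement. -/
theorem ZPostQAL_subset_NQAL_inter_coNQAL {α : Type} [Fintype α] (L : Set (List α))
    (hL : ZPostQAL L) :
    (∃ M : QFA α, L = {w : List α | 0 < M.fa w}) ∧
      (∃ M : QFA α, Lᶜ = {w : List α | 0 < M.fa w}) := by
  obtain ⟨M, hM⟩ := hL
  have key : ∀ w : List α,
      (w ∈ L → 0 < M.pacc w ∧ M.prej w = 0) ∧ (w ∉ L → M.pacc w = 0 ∧ 0 < M.prej w) := by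
    intro w
    have hpos : 0 < M.pacc w + M.prej w := M.postPos w
    constructor
    · intro hw
      have h1 : M.fa w = 1 := (hM w).1 hw
      have : M.pacc w = M.pacc w + M.prej w := by
        have := h1
        unfold PostQFA.fa at this
        field_simp at this
        linarith [this]
      constructor
      · linarith
      · linarith
    · intro hw
      have h0 : M.fa w = 0 := (hM w).2 hw
      have hp : M.pacc w = 0 := by
        unfold PostQFA.fa at h0
        rcases div_eq_zero_iff.mp h0 with h | h
        · exact h
        · linarith
      exact ⟨hp, by linarith⟩
  constructor
  · refine ⟨⟨M.n, M.k, M.E, M.kraus, M.Qpa⟩, ?_⟩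
    ext w
    simp only [Set.mem_setOf_eq]
    constructor
    · intro hw
      exact ((key w).1 hw).1
    · intro h
      by_contra hw
      have := ((key w).2 hw).1
      change (0:ℝ) < M.pacc w at h
      linarith
  · refine ⟨⟨M.n, M.k, M.E, M.kraus, M.Qpr⟩, ?_⟩
    ext w
    simp only [Set.mem_compl_iff, Set.mem_setOf_eq]
    constructor
    · intro hw
      exact ((key w).2 hw).2
    · intro h
      intro hw
      have := ((key w).1 hw).2
      change (0:ℝ) < M.prej w at h
      linarith
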